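/- Let L > 0, σ > 0 with √3 σ ≤ 1/L. Define f as in the tent-function construction: f(x) = 0 for x < -1/L or x > 2/L, f(x) = Lx + 1 for -1/L ≤ x < 0, f(x) = 1 - (L/2)x for 0 ≤ x ≤ 2/L. Let ψ_σ be the uniform density on [-√3 σ, √3 σ] and let f_σ = f * ψ_σ be the convolution. Then the maximizer of f is x* = 0, the maximizer of f_σ is x*_σ = σ/√3, and f(x*) - f(x*_σ) = Lσ/(2√3). -/

import Mathlib

open MeasureTheory Real

/-- For the tent function `f` with Lipschitz constant `L`, and the uniform noise density
`ψ_σ` on `[-√3 σ, √3 σ]` with `√3 σ ≤ 1/L`, the maximizer of `f` is `x* = 0`, the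
maximizer of the smoothed function `f_σ = f * ψ_σ` is `x*_σ = σ/√3`, and
`f(x*) - f(x*_σ) = L σ / (2 √3)`. -/
theorem stmt_2 (L σ : ℝ) (hL : 0 < L) (hσ : 0 < σ) (hσL : Real.sqrt 3 * σ ≤ 1 / L)
    (f ψ fσ : ℝ → ℝ)
    (hf : ∀ x : ℝ, f x =
      if x < -1 / L ∨ x > 2 / L then 0
      else if x < 0 then L * x + 1
      else 1 - L / 2 * x)
    (hψ : ∀ x : ℝ, ψ x =
      if -(Real.sqrt 3 * σ) ≤ x ∧ x ≤ Real.sqrt 3 * σ then 1 / (2 * Real.sqrt 3 * σ) else 0)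
    (hfσ : ∀ x : ℝ, fσ x = ∫ t : ℝ, ψ (x - t) * f t) :
    (∀ x : ℝ, f x ≤ f 0) ∧ (∀ x : ℝ, fσ x ≤ fσ (σ / Real.sqrt 3)) ∧
      f 0 - f (σ / Real.sqrt 3) = L * σ / (2 * Real.sqrt 3) := by
  have h3 : (0:ℝ) < Real.sqrt 3 := Real.sqrt_pos.2 (by norm_num)
  have h3sq : Real.sqrt 3 * Real.sqrt 3 = 3 := Real.mul_self_sqrt (by norm_num)
  set s : ℝ := Real.sqrt 3 * σ with hs_def
  have hs : 0 < s := mul_pos h3 hσ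
  have hsL : s ≤ 1 / L := hσL
  have hLpos : (0:ℝ) < 1 / L := by positivity
  have hsL' : L * s ≤ 1 := by
    rw [le_div_iff₀ hL] at hsL
    nlinarith
  have hxs : σ / Real.sqrt 3 = s / 3 := by
    rw [hs_def, div_eq_div_iff h3.ne' (by norm_num : (3:ℝ) ≠ 0)]
    nlinarith
  -- closed form for f
  have hf' : ∀ x : ℝ, f x = max 0 (min (L * x + 1) (1 - L / 2 * x)) := by
    intro x
    rw [hf]
    split_ifs with h1 h2
    · rcases h1 with h1 | h1
      · have hx : x < -1 / L := h1
        have hx' : x * L < -1 := by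
          rw [lt_div_iff₀ hL] at hx
          linarith
        symm
        rw [max_eq_left]
        exact le_trans (min_le_left _ _) (by nlinarith)
      · have hx : 2 < x * L := by
          rw [gt_iff_lt, div_lt_iff₀ hL] at h1
          linarith
        symm
        rw [max_eq_left]
        exact le_trans (min_le_right _ _) (by nlinarith)
    · push_neg at h1
      have hx : -1 ≤ x * L := by
        have h := h1.1
        rw [div_le_iff₀ hL] at h
        linarith
      symm
      rw [min_eq_left (by nlinarith), max_eq_right (by nlinarith)]
    · push_neg at h1 h2
      have hx : x * L ≤ 2 := by
        have h := h1.2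
        rw [le_div_iff₀ hL] at h
        linarith
      symm
      rw [min_eq_right (by nlinarith), max_eq_right (by nlinarith)]
  have hcont : Continuous f := by
    have hfe : f = fun x => max 0 (min (L * x + 1) (1 - L / 2 * x)) := funext hf'
    rw [hfe]
    fun_prop
  have hInt : ∀ a b : ℝ, IntervalIntegrable f volume a b :=
    fun a b => hcont.intervalIntegrable a b
  -- convolution as an interval integral
  have hconv : ∀ x : ℝ, fσ x = (2*s)⁻¹ * ∫ t in (x - s)..(x + s), f t := by
    intro x
    rw [hfσ]
    have hind : ∀ t : ℝ, ψ (x - t) * f t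
        = Set.indicator (Set.Icc (x - s) (x + s)) (fun t => (2*s)⁻¹ * f t) t := by
      intro t
      rw [hψ]
      by_cases ht : t ∈ Set.Icc (x - s) (x + s)
      · rw [Set.indicator_of_mem ht, if_pos]
        · show 1 / (2 * Real.sqrt 3 * σ) * f t = (2 * s)⁻¹ * f t
          rw [hs_def, one_div, mul_assoc]
        · obtain ⟨ha, hb⟩ := ht
          constructor <;> linarith
      · rw [Set.indicator_of_notMem ht, if_neg, zero_mul]
        rw [Set.mem_Icc] at ht
        push_neg at ht
        rintro ⟨ha, hb⟩
        have := ht (by linarith)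
        linarith
    simp_rw [hind]
    rw [MeasureTheory.integral_indicator measurableSet_Icc,
      MeasureTheory.integral_Icc_eq_integral_Ioc,
      ← intervalIntegral.integral_of_le (by linarith : x - s ≤ x + s),
      ← intervalIntegral.integral_const_mul]
  -- derivative of fσ
  have hg : ∀ y : ℝ, HasDerivAt (fun u => ∫ t in (0:ℝ)..u, f t) (f y) y := fun y =>
    intervalIntegral.integral_hasDerivAt_right (hInt 0 y)
      (hcont.stronglyMeasurableAtFilter _ _) hcont.continuousAt
  have hform : fσ = fun x => (2*s)⁻¹ *
      ((∫ t in (0:ℝ)..(x+s), f t) - ∫ t in (0:ℝ)..(x-s), f t) := by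
    funext x
    rw [hconv x, ← intervalIntegral.integral_add_adjacent_intervals (hInt (x-s) 0) (hInt 0 (x+s)),
      intervalIntegral.integral_symm]
    ring
  have hderiv : ∀ x : ℝ, HasDerivAt fσ ((2*s)⁻¹ * (f (x+s) - f (x-s))) x := by
    intro x
    rw [hform]
    have h1 : HasDerivAt (fun u : ℝ => ∫ t in (0:ℝ)..(u+s), f t) (f (x+s)) x := by
      have h := (hg (x+s)).comp x ((hasDerivAt_id x).add_const s)
      simpa [Function.comp_def] using h
    have h2 : HasDerivAt (fun u : ℝ => ∫ t in (0:ℝ)..(u-s), f t) (f (x-s)) x := by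
      have h := (hg (x-s)).comp x ((hasDerivAt_id x).sub_const s)
      simpa [Function.comp_def] using h
    exact (h1.sub h2).const_mul _
  have hc2 : Continuous fσ := by
    rw [continuous_iff_continuousAt]
    exact fun x => (hderiv x).continuousAt
  -- sign of the derivative
  have sign1 : ∀ x : ℝ, x ≤ s/3 → f (x - s) ≤ f (x + s) := by
    intro x hx
    rw [hf', hf']
    refine max_le_max le_rfl (le_min ?_ ?_)
    · exact le_trans (min_le_left _ _) (by nlinarith)
    · refine le_trans (min_le_left _ _) ?_
      nlinarith [mul_nonneg hL.le (show (0:ℝ) ≤ s - 3*x by linarith)]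
  have sign2 : ∀ x : ℝ, s/3 ≤ x → f (x + s) ≤ f (x - s) := by
    intro x hx
    rw [hf', hf']
    refine max_le_max le_rfl (le_min ?_ ?_)
    · refine le_trans (min_le_right _ _) ?_
      nlinarith [mul_nonneg hL.le (show (0:ℝ) ≤ 3*x - s by linarith)]
    · exact le_trans (min_le_right _ _) (by nlinarith)
  have hmono : MonotoneOn fσ (Set.Iic (s/3)) := by
    apply monotoneOn_of_deriv_nonneg (convex_Iic _) hc2.continuousOn
    · intro x _
      exact (hderiv x).differentiableAt.differentiableWithinAt
    · intro x hx
      rw [interior_Iic, Set.mem_Iio] at hx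
      rw [(hderiv x).deriv]
      have h1 := sign1 x hx.le
      have h2s : (0:ℝ) ≤ (2*s)⁻¹ := by positivity
      nlinarith
  have hanti : AntitoneOn fσ (Set.Ici (s/3)) := by
    apply antitoneOn_of_deriv_nonpos (convex_Ici _) hc2.continuousOn
    · intro x _
      exact (hderiv x).differentiableAt.differentiableWithinAt
    · intro x hx
      rw [interior_Ici, Set.mem_Ioi] at hx
      rw [(hderiv x).deriv]
      have h1 := sign2 x hx.le
      have h2s : (0:ℝ) ≤ (2*s)⁻¹ := by positivity
      nlinarith
  refine ⟨?_, ?_, ?_⟩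
  · -- f is maximized at 0
    intro x
    rw [hf' x, hf' 0]
    have h01 : max (0:ℝ) (min (L * 0 + 1) (1 - L / 2 * 0)) = 1 := by norm_num
    rw [h01]
    rcases le_total x 0 with hx | hx
    · refine max_le (by norm_num) (le_trans (min_le_left _ _) ?_)
      nlinarith [mul_nonneg hL.le (show (0:ℝ) ≤ -x by linarith)]
    · refine max_le (by norm_num) (le_trans (min_le_right _ _) ?_)
      nlinarith [mul_nonneg hL.le hx]
  · -- fσ is maximized at σ/√3 = s/3
    intro x
    rw [hxs]
    rcases le_total x (s/3) with hx | hx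
    · exact hmono (Set.mem_Iic.2 hx) (Set.mem_Iic.2 le_rfl) hx
    · exact hanti (Set.mem_Ici.2 le_rfl) (Set.mem_Ici.2 hx) hx
  · -- the gap
    have hv : (0:ℝ) ≤ s/3 := by positivity
    have hf0 : f 0 = 1 := by rw [hf']; norm_num
    have hfv : f (σ / Real.sqrt 3) = 1 - L / 2 * (s/3) := by
      rw [hxs, hf']
      rw [min_eq_right (by nlinarith), max_eq_right (by nlinarith [mul_nonneg hL.le hv])]
    rw [hf0, hfv, hs_def]
    rw [eq_div_iff (ne_of_gt (by positivity : (0:ℝ) < 2 * Real.sqrt 3))]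
    linear_combination (L * σ / 3) * h3sq
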